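/- If an m-linear form U on (ℝⁿ)^m (sup norms) has at most 4^{m−1} nonzero monomial coefficients, then (∑_{j₁,…,j_m}|U(e_{j₁},…,e_{j_m})|^{2m/(m+1)})^{(m+1)/(2m)} ≤ 2^{1−1/m} ‖U‖, and the constant 2^{1−1/m} is attained (e.g., by the recursively defined forms S_m with 4^{m−1} unimodular monomials and ‖S_m‖ = 2^{m−1}). -/

import Mathlib

noncomputable def stdBasis (n : ℕ) (i : Fin n) : PiLp ⊤ (fun _ : Fin n => ℝ) :=
  (WithLp.equiv ⊤ (∀ _ : Fin n, ℝ)).symm (Pi.single i 1)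
lemma stdBasis_apply (n : ℕ) (i u : Fin n) : stdBasis n i u = if u = i then 1 else 0 := by
  simp [stdBasis, Pi.single_apply]
lemma basis_expand (n : ℕ) (x : PiLp ⊤ fun _ : Fin n => ℝ) :
    x = ∑ u : Fin n, x u • stdBasis n u := by
  ext v
  rw [WithLp.ofLp_sum, Finset.sum_apply]
  rw [Finset.sum_eq_single v] <;> simp [stdBasis_apply]
  intro u hu; simp [Ne.symm hu]
lemma expand (m n : ℕ)
    (U : ContinuousMultilinearMap ℝ (fun _ : Fin m => PiLp ⊤ fun _ : Fin n => ℝ) ℝ)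
    (x : Fin m → PiLp ⊤ fun _ : Fin n => ℝ) :
    U x = ∑ j : Fin m → Fin n, (∏ s, x s (j s)) * U (fun s => stdBasis n (j s)) := by
  have h1 : U x = U (fun s => ∑ u : Fin n, x s u • stdBasis n u) := by
    congr 1; funext s; exact basis_expand n (x s)
  rw [h1]
  have h2 := U.toMultilinearMap.map_sum (g := fun s u => x s u • stdBasis n u)
  rw [show (U fun s => ∑ u : Fin n, x s u • stdBasis n u)
      = U.toMultilinearMap (fun s => ∑ u : Fin n, x s u • stdBasis n u) from rfl, h2]
  congr 1; funext j
  rw [U.toMultilinearMap.map_smul_univ]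
  simp [smul_eq_mul]
private def r : Bool → ℝ := fun t => if t then 1 else -1

lemma r_mul_self (t : Bool) : r t * r t = 1 := by cases t <;> simp [r]

lemma pair_sum (n : ℕ) (a b : Fin n) :
    ∑ g : Fin n → Bool, r (g a) * r (g b) = if a = b then (2 : ℝ) ^ n else 0 := by
  rcases eq_or_ne a b with rfl | hab
  · simp only [if_pos rfl, r_mul_self]
    rw [Finset.sum_const]
    simp [Fintype.card_fun]
  · rw [if_neg hab]
    apply Finset.sum_involution (fun g _ => Function.update g a (!(g a)))
    · intro g _
      rw [Function.update_self, Function.update_of_ne (Ne.symm hab)]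
      cases h : g a <;> cases hb : g b <;> simp [r, h, hb]
    · intro g _ hg heq
      have := congrFun heq a
      rw [Function.update_self] at this
      cases g a <;> simp_all
    · intro g _
      funext t
      rcases eq_or_ne t a with rfl | ht
      · simp
      · rw [Function.update_of_ne ht, Function.update_of_ne ht]
    · intro g _; exact Finset.mem_univ _

lemma horth (m n : ℕ) (j j' : Fin m → Fin n) :
    ∑ ε : Fin m → Fin n → Bool, ∏ s, r (ε s (j s)) * r (ε s (j' s)) =
      if j = j' then ((2 : ℝ) ^ n) ^ m else 0 := by
  rw [← Fintype.prod_sum (f := fun s (g : Fin n → Bool) => r (g (j s)) * r (g (j' s)))]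
  rcases eq_or_ne j j' with rfl | hjj
  · simp [pair_sum]
  · rw [if_neg hjj]
    have : ∃ s, j s ≠ j' s := by
      by_contra h; push_neg at h; exact hjj (funext h)
    obtain ⟨s, hs⟩ := this
    apply Finset.prod_eq_zero (Finset.mem_univ s)
    rw [pair_sum, if_neg hs]

lemma coord_abs_le (n : ℕ) (x : PiLp ⊤ fun _ : Fin n => ℝ) (u : Fin n) : |x u| ≤ ‖x‖ := by
  rw [PiLp.norm_eq_ciSup]
  have : |x u| = ‖x u‖ := (Real.norm_eq_abs _).symm
  rw [this]
  exact le_ciSup (f := fun i => ‖x i‖) (Finite.bddAbove_range _) u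

lemma sum_sq_le (m n : ℕ)
    (U : ContinuousMultilinearMap ℝ (fun _ : Fin m => PiLp ⊤ fun _ : Fin n => ℝ) ℝ) :
    ∑ j : Fin m → Fin n, (U fun s => stdBasis n (j s)) ^ 2 ≤ ‖U‖ ^ 2 := by
  set c : (Fin m → Fin n) → ℝ := fun j => U fun s => stdBasis n (j s) with hc
  set xe : (Fin m → Fin n → Bool) → Fin m → PiLp ⊤ (fun _ : Fin n => ℝ) :=
    fun ε s => (WithLp.equiv ⊤ (∀ _ : Fin n, ℝ)).symm (fun u => r (ε s u)) with hxe
  have hval : ∀ ε, U (xe ε) = ∑ j, (∏ s, r (ε s (j s))) * c j := fun ε => expand m n U (xe ε)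
  have hnorm : ∀ ε s, ‖xe ε s‖ ≤ 1 := by
    intro ε s
    rw [PiLp.norm_eq_ciSup]
    refine Real.iSup_le (fun u => ?_) zero_le_one
    have : (xe ε s) u = r (ε s u) := rfl
    rw [this, Real.norm_eq_abs]
    cases ε s u <;> simp [r]
  have hsq : ∀ ε, (U (xe ε)) ^ 2 ≤ ‖U‖ ^ 2 := by
    intro ε
    have h1 : ‖U (xe ε)‖ ≤ ‖U‖ := by
      refine le_trans (U.le_opNorm (xe ε)) ?_
      have : ∏ s, ‖xe ε s‖ ≤ 1 :=
        Finset.prod_le_one (fun s _ => norm_nonneg _) (fun s _ => hnorm ε s)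
      nlinarith [norm_nonneg U]
    rw [← sq_abs, ← Real.norm_eq_abs]
    exact pow_le_pow_left₀ (norm_nonneg _) h1 2
  have key : ∑ ε : Fin m → Fin n → Bool, (U (xe ε)) ^ 2
      = ((2 : ℝ) ^ n) ^ m * ∑ j : Fin m → Fin n, c j ^ 2 := by
    calc ∑ ε : Fin m → Fin n → Bool, (U (xe ε)) ^ 2
        = ∑ ε : Fin m → Fin n → Bool, ∑ j : Fin m → Fin n, ∑ j' : Fin m → Fin n,
            (c j * c j') * ∏ s, r (ε s (j s)) * r (ε s (j' s)) := by
          refine Finset.sum_congr rfl fun ε _ => ?_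
          rw [hval, pow_two, Finset.sum_mul_sum]
          refine Finset.sum_congr rfl fun j _ => Finset.sum_congr rfl fun j' _ => ?_
          rw [Finset.prod_mul_distrib]; ring
      _ = ∑ j : Fin m → Fin n, ∑ j' : Fin m → Fin n,
            (c j * c j') * ∑ ε : Fin m → Fin n → Bool, ∏ s, r (ε s (j s)) * r (ε s (j' s)) := by
          rw [Finset.sum_comm]
          refine Finset.sum_congr rfl fun j _ => ?_
          rw [Finset.sum_comm]
          refine Finset.sum_congr rfl fun j' _ => ?_
          rw [← Finset.mul_sum]
      _ = ∑ j : Fin m → Fin n, c j ^ 2 * ((2 : ℝ) ^ n) ^ m := by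
          refine Finset.sum_congr rfl fun j _ => ?_
          rw [Finset.sum_eq_single j]
          · rw [horth, if_pos rfl, pow_two]
          · intro j' _ hj'
            rw [horth, if_neg (Ne.symm hj'), mul_zero]
          · simp
      _ = ((2 : ℝ) ^ n) ^ m * ∑ j : Fin m → Fin n, c j ^ 2 := by
          rw [← Finset.sum_mul]; ring
  have hcard : ∑ ε : Fin m → Fin n → Bool, ‖U‖ ^ 2 = ((2 : ℝ) ^ n) ^ m * ‖U‖ ^ 2 := by
    rw [Finset.sum_const, Finset.card_univ]
    simp [Fintype.card_fun]
  have h2 : ((2 : ℝ) ^ n) ^ m * ∑ j : Fin m → Fin n, c j ^ 2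
      ≤ ((2 : ℝ) ^ n) ^ m * ‖U‖ ^ 2 := by
    rw [← key, ← hcard]
    exact Finset.sum_le_sum fun ε _ => hsq ε
  have hpos : (0 : ℝ) < ((2 : ℝ) ^ n) ^ m := by positivity
  exact le_of_mul_le_mul_left h2 hpos

lemma part1 (m : ℕ) (hm : 1 ≤ m) (n : ℕ)
    (U : ContinuousMultilinearMap ℝ (fun _ : Fin m => PiLp ⊤ fun _ : Fin n => ℝ) ℝ)
    (hcard : (Finset.univ.filter
        (fun j : Fin m → Fin n => U (fun s => stdBasis n (j s)) ≠ 0)).card ≤ 4 ^ (m - 1)) :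
    (∑ j : Fin m → Fin n,
        |U (fun s => stdBasis n (j s))| ^ ((2 * m : ℝ) / (m + 1))) ^ ((m + 1 : ℝ) / (2 * m))
      ≤ (2 : ℝ) ^ ((1 : ℝ) - 1 / m) * ‖U‖ := by
  set c : (Fin m → Fin n) → ℝ := fun j => U fun s => stdBasis n (j s) with hc
  set M : ℝ := (m : ℝ) with hMdef
  have hM : 1 ≤ M := Nat.one_le_cast.mpr hm
  have hM0 : 0 < M := lt_of_lt_of_le one_pos hM
  set p : ℝ := 2 * M / (M + 1) with hpdef
  have hp0 : 0 < p := by positivity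
  set S : Finset (Fin m → Fin n) := Finset.univ.filter (fun j => c j ≠ 0) with hS
  have h1 : ∑ j : Fin m → Fin n, |c j| ^ p = ∑ j ∈ S, |c j| ^ p := by
    refine (Finset.sum_subset (Finset.subset_univ S) ?_).symm
    intro j _ hj
    have : c j = 0 := by
      by_contra h
      exact hj (Finset.mem_filter.mpr ⟨Finset.mem_univ _, h⟩)
    rw [this, abs_zero, Real.zero_rpow (ne_of_gt hp0)]
  have hpq : Real.HolderConjugate ((M + 1) / M) (M + 1) := by
    rw [Real.holderConjugate_iff]
    constructor
    · rw [lt_div_iff₀ hM0]; linarith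
    · field_simp
  have holder := Real.inner_le_Lp_mul_Lq_of_nonneg (s := S)
    (f := fun j => |c j| ^ p) (g := fun _ => (1 : ℝ)) hpq
    (fun j _ => Real.rpow_nonneg (abs_nonneg _) _) (fun j _ => zero_le_one)
  simp only [mul_one, Real.one_rpow, Finset.sum_const, nsmul_eq_mul] at holder
  have h2 : p * ((M + 1) / M) = 2 := by
    rw [hpdef]; field_simp
  have hexp1 : ∀ j, (|c j| ^ p) ^ ((M + 1) / M) = c j ^ 2 := by
    intro j
    rw [← Real.rpow_mul (abs_nonneg _), h2,
      show (2 : ℝ) = ((2 : ℕ) : ℝ) by norm_cast, Real.rpow_natCast, sq_abs]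
  have hBsum : ∑ j ∈ S, c j ^ 2 ≤ ‖U‖ ^ 2 :=
    le_trans (Finset.sum_le_sum_of_subset_of_nonneg (Finset.subset_univ S)
      (fun j _ _ => sq_nonneg _)) (sum_sq_le m n U)
  rw [one_div_div] at holder
  have hA : ∑ j ∈ S, |c j| ^ p
      ≤ (‖U‖ ^ 2) ^ (M / (M + 1)) * ((4 : ℝ) ^ (m - 1)) ^ (1 / (M + 1)) := by
    refine le_trans holder (mul_le_mul ?_ ?_ (by positivity) (by positivity))
    · refine Real.rpow_le_rpow (Finset.sum_nonneg fun j _ => Real.rpow_nonneg (Real.rpow_nonneg (abs_nonneg _) _) _) ?_ (by positivity)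
      calc ∑ j ∈ S, (|c j| ^ p) ^ ((M + 1) / M) = ∑ j ∈ S, c j ^ 2 :=
            Finset.sum_congr rfl fun j _ => hexp1 j
        _ ≤ ‖U‖ ^ 2 := hBsum
    · refine Real.rpow_le_rpow (Nat.cast_nonneg _) ?_ (by positivity)
      exact_mod_cast hcard
  show (∑ j : Fin m → Fin n, |c j| ^ p) ^ ((M + 1) / (2 * M)) ≤ 2 ^ (1 - 1 / M) * ‖U‖
  rw [h1]
  calc (∑ j ∈ S, |c j| ^ p) ^ ((M + 1) / (2 * M))
      ≤ ((‖U‖ ^ 2) ^ (M / (M + 1)) * ((4 : ℝ) ^ (m - 1)) ^ (1 / (M + 1))) ^ ((M + 1) / (2 * M)) := by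
        refine Real.rpow_le_rpow ?_ hA (by positivity)
        exact Finset.sum_nonneg fun j _ => Real.rpow_nonneg (abs_nonneg _) _
    _ = (‖U‖ ^ 2) ^ (M / (M + 1) * ((M + 1) / (2 * M)))
        * ((4 : ℝ) ^ (m - 1)) ^ (1 / (M + 1) * ((M + 1) / (2 * M))) := by
        rw [Real.mul_rpow (by positivity) (by positivity),
          ← Real.rpow_mul (by positivity), ← Real.rpow_mul (by positivity)]
    _ = ‖U‖ * ((4 : ℝ) ^ (m - 1)) ^ (1 / (2 * M)) := by
        have e1 : M / (M + 1) * ((M + 1) / (2 * M)) = 1 / 2 := by field_simp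
        have e2 : 1 / (M + 1) * ((M + 1) / (2 * M)) = 1 / (2 * M) := by field_simp
        rw [e1, e2]
        congr 1
        rw [show ‖U‖ ^ 2 = ‖U‖ ^ ((2 : ℕ) : ℝ) from (Real.rpow_natCast _ 2).symm,
          ← Real.rpow_mul (norm_nonneg _)]
        norm_num
    _ = 2 ^ (1 - 1 / M) * ‖U‖ := by
        rw [mul_comm]
        congr 1
        have h4 : ((4 : ℝ)) ^ (m - 1) = (2 : ℝ) ^ ((2 * (m - 1) : ℕ) : ℝ) := by
          rw [Real.rpow_natCast, pow_mul]; norm_num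
        rw [h4, ← Real.rpow_mul (by norm_num)]
        congr 1
        have h5 : ((2 * (m - 1) : ℕ) : ℝ) = 2 * (M - 1) := by
          push_cast [Nat.cast_sub hm]; ring
        rw [h5]
        field_simp


noncomputable def TT (m n : ℕ) (c : (Fin m → Fin n) → ℝ) :
    ContinuousMultilinearMap ℝ (fun _ : Fin m => PiLp ⊤ fun _ : Fin n => ℝ) ℝ :=
  ∑ j : Fin m → Fin n, c j •
    (ContinuousMultilinearMap.mkPiAlgebra ℝ (Fin m) ℝ).compContinuousLinearMap
      (fun s => PiLp.proj ⊤ (fun _ : Fin n => ℝ) (j s))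

lemma TT_apply (m n : ℕ) (c : (Fin m → Fin n) → ℝ) (x : Fin m → PiLp ⊤ fun _ : Fin n => ℝ) :
    TT m n c x = ∑ j : Fin m → Fin n, c j * ∏ s, x s (j s) := by
  simp [TT, ContinuousMultilinearMap.sum_apply]


lemma TT_basis (m n : ℕ) (c : (Fin m → Fin n) → ℝ) (j : Fin m → Fin n) :
    TT m n c (fun s => stdBasis n (j s)) = c j := by
  rw [TT_apply]
  rw [Finset.sum_eq_single j]
  · simp [stdBasis_apply]
  · intro j' _ hj'
    have : ∃ s, j' s ≠ j s := by
      by_contra h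
      push_neg at h
      exact hj' (funext h)
    obtain ⟨s, hs⟩ := this
    rw [Finset.prod_eq_zero (Finset.mem_univ s)]
    · ring
    · simp [stdBasis_apply, hs]
  · simp

lemma habs (a b M : ℝ) (ha : |a| ≤ M) (hb : |b| ≤ M) : |a + b| + |a - b| ≤ 2 * M := by
  rw [abs_le] at ha hb
  rcases abs_cases (a + b) with ⟨h1, _⟩ | ⟨h1, _⟩ <;>
    rcases abs_cases (a - b) with ⟨h2, _⟩ | ⟨h2, _⟩ <;> rw [h1, h2] <;> linarith [ha.1, ha.2, hb.1, hb.2]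

lemma descent_step (k : ℕ) (G : Fin k → (Fin k → Bool) → ℝ) (M : Fin k → ℝ)
    (hG : ∀ i b, 0 ≤ G i b)
    (hdep : ∀ (i : Fin k) (b b' : Fin k → Bool), (∀ t : Fin k, i ≤ t → b t = b' t) → G i b = G i b')
    (hsum : ∀ (i : Fin k) (b : Fin k → Bool),
      G i (Function.update b i false) + G i (Function.update b i true) ≤ 2 * M i)
    (l : ℕ) (hl : l < k) :
    ∑ b : Fin k → Bool, ∏ i ∈ Finset.univ.filter (fun i : Fin k => l ≤ i.val), G i b
      ≤ M ⟨l, hl⟩ * ∑ b : Fin k → Bool,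
          ∏ i ∈ Finset.univ.filter (fun i : Fin k => l + 1 ≤ i.val), G i b := by
  set i₀ : Fin k := ⟨l, hl⟩ with hi₀
  have hfil : Finset.univ.filter (fun i : Fin k => l ≤ i.val)
      = insert i₀ (Finset.univ.filter (fun i : Fin k => l + 1 ≤ i.val)) := by
    ext i
    simp only [Finset.mem_filter, Finset.mem_univ, true_and, Finset.mem_insert]
    constructor
    · intro h
      rcases eq_or_lt_of_le h with h' | h'
      · left; exact Fin.ext h'.symm
      · right; omega
    · rintro (rfl | h)
      · simp [hi₀]
      · omega
  have hnot : i₀ ∉ Finset.univ.filter (fun i : Fin k => l + 1 ≤ i.val) := by simp [hi₀]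
  set F : (Fin k → Bool) → ℝ :=
    fun b => ∏ i ∈ Finset.univ.filter (fun i : Fin k => l + 1 ≤ i.val), G i b with hF
  have hFinv : ∀ (b : Fin k → Bool) (v : Bool), F (Function.update b i₀ v) = F b := by
    intro b v
    refine Finset.prod_congr rfl fun i hi => ?_
    refine hdep i _ _ fun t ht => ?_
    apply Function.update_of_ne
    intro h
    rw [h] at ht
    simp only [Finset.mem_filter] at hi
    have : (i : ℕ) ≤ l := ht
    omega
  have hF0 : ∀ b, 0 ≤ F b := fun b => Finset.prod_nonneg fun i _ => hG i b
  have hrw : ∀ b, ∏ i ∈ Finset.univ.filter (fun i : Fin k => l ≤ i.val), G i b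
      = G i₀ b * F b := by
    intro b
    rw [hfil, Finset.prod_insert hnot]
  simp only [hrw]
  -- flip involution
  set σ : (Fin k → Bool) → (Fin k → Bool) := fun b => Function.update b i₀ (!(b i₀)) with hσ
  have hσinvol : Function.Involutive σ := by
    intro b
    funext t
    rcases eq_or_ne t i₀ with rfl | ht
    · simp [hσ]
    · simp [hσ, Function.update_of_ne ht]
  have hre : ∑ b : Fin k → Bool, G i₀ (σ b) * F (σ b) = ∑ b : Fin k → Bool, G i₀ b * F b :=
    Equiv.sum_comp (Function.Involutive.toPerm σ hσinvol) (fun b => G i₀ b * F b)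
  have hpair : ∀ b, G i₀ b + G i₀ (σ b) ≤ 2 * M i₀ := by
    intro b
    cases hb : b i₀
    · have h1 : b = Function.update b i₀ false := by
        funext t; rcases eq_or_ne t i₀ with rfl | ht
        · simp [hb]
        · simp [Function.update_of_ne ht]
      have h2 : σ b = Function.update b i₀ true := by
        simp [hσ, hb]
      rw [h2]
      nth_rewrite 1 [h1]
      exact hsum i₀ b
    · have h1 : b = Function.update b i₀ true := by
        funext t; rcases eq_or_ne t i₀ with rfl | ht
        · simp [hb]
        · simp [Function.update_of_ne ht]
      have h2 : σ b = Function.update b i₀ false := by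
        simp [hσ, hb]
      rw [h2]
      nth_rewrite 1 [h1]
      rw [add_comm]
      exact hsum i₀ b
  have key : 2 * ∑ b : Fin k → Bool, G i₀ b * F b ≤ 2 * (M i₀ * ∑ b : Fin k → Bool, F b) := by
    calc 2 * ∑ b : Fin k → Bool, G i₀ b * F b
        = ∑ b : Fin k → Bool, G i₀ b * F b + ∑ b : Fin k → Bool, G i₀ (σ b) * F (σ b) := by
          rw [hre]; ring
      _ = ∑ b : Fin k → Bool, (G i₀ b + G i₀ (σ b)) * F b := by
          rw [← Finset.sum_add_distrib]
          refine Finset.sum_congr rfl fun b _ => ?_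
          rw [hFinv]
          ring
      _ ≤ ∑ b : Fin k → Bool, (2 * M i₀) * F b := by
          refine Finset.sum_le_sum fun b _ => ?_
          exact mul_le_mul_of_nonneg_right (hpair b) (hF0 b)
      _ = 2 * (M i₀ * ∑ b : Fin k → Bool, F b) := by
          simp only [Finset.mul_sum]
          exact Finset.sum_congr rfl fun b _ => by ring
  linarith

lemma descent (k : ℕ) (G : Fin k → (Fin k → Bool) → ℝ) (M : Fin k → ℝ)
    (hG : ∀ i b, 0 ≤ G i b) (hM : ∀ i, 0 ≤ M i)
    (hdep : ∀ (i : Fin k) (b b' : Fin k → Bool), (∀ t : Fin k, i ≤ t → b t = b' t) → G i b = G i b')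
    (hsum : ∀ (i : Fin k) (b : Fin k → Bool),
      G i (Function.update b i false) + G i (Function.update b i true) ≤ 2 * M i) :
    ∑ b : Fin k → Bool, ∏ i, G i b ≤ 2 ^ k * ∏ i, M i := by
  have aux : ∀ d : ℕ, ∑ b : Fin k → Bool,
      ∏ i ∈ Finset.univ.filter (fun i : Fin k => k - d ≤ i.val), G i b
      ≤ 2 ^ k * ∏ i ∈ Finset.univ.filter (fun i : Fin k => k - d ≤ i.val), M i := by
    intro d
    induction d with
    | zero =>
      have : Finset.univ.filter (fun i : Fin k => k - 0 ≤ i.val) = ∅ := by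
        ext i
        simp only [Finset.mem_filter, Finset.mem_univ, true_and, Finset.notMem_empty, iff_false]
        omega
      rw [this]
      simp [Fintype.card_fun]
    | succ d ih =>
      rcases le_or_gt k d with hkd | hkd
      · have : k - (d + 1) = k - d := by omega
        rw [this]; exact ih
      · have hl : k - (d + 1) < k := by omega
        have hstep := descent_step k G M hG hdep hsum (k - (d + 1)) hl
        have heq : k - (d + 1) + 1 = k - d := by omega
        rw [heq] at hstep
        have hfil2 : Finset.univ.filter (fun i : Fin k => k - (d+1) ≤ i.val)
            = insert (⟨k - (d+1), hl⟩ : Fin k)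
              (Finset.univ.filter (fun i : Fin k => k - d ≤ i.val)) := by
          ext i
          simp only [Finset.mem_filter, Finset.mem_univ, true_and, Finset.mem_insert]
          constructor
          · intro h
            rcases eq_or_lt_of_le h with h' | h'
            · left; exact Fin.ext h'.symm
            · right; omega
          · rintro (rfl | h) <;> simp <;> omega
        calc ∑ b : Fin k → Bool, ∏ i ∈ Finset.univ.filter (fun i : Fin k => k - (d+1) ≤ i.val), G i b
            ≤ M ⟨k - (d+1), hl⟩ * ∑ b : Fin k → Bool,
                ∏ i ∈ Finset.univ.filter (fun i : Fin k => k - d ≤ i.val), G i b := hstep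
          _ ≤ M ⟨k - (d+1), hl⟩ * (2 ^ k * ∏ i ∈ Finset.univ.filter (fun i : Fin k => k - d ≤ i.val), M i) :=
              mul_le_mul_of_nonneg_left ih (hM _)
          _ = 2 ^ k * ∏ i ∈ Finset.univ.filter (fun i : Fin k => k - (d+1) ≤ i.val), M i := by
              rw [hfil2, Finset.prod_insert (by simp; omega)]
              ring
  have := aux k
  have hfull : Finset.univ.filter (fun i : Fin k => k - k ≤ i.val) = Finset.univ := by
    ext i; simp
  rw [hfull] at this
  exact this

noncomputable def eqv (k : ℕ) : (Fin k → Bool) ≃ Fin (2 ^ k) :=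
  Fintype.equivFinOfCardEq (by simp [Fintype.card_fun])

def idxf (k : ℕ) (i : Fin k) (b : Fin k → Bool) (β : Bool) : Fin k → Bool :=
  fun t => if t < i then false else if t = i then β else b t

noncomputable def Phi (k : ℕ) (q : (Fin k → Bool) × (Fin k → Bool)) : Fin (k + 1) → Fin (2 ^ k) :=
  Fin.cons (eqv k q.1) (fun i => eqv k (idxf k i q.1 (q.2 i)))

def condP (k : ℕ) (j : Fin (k + 1) → Fin (2 ^ k)) : Prop :=
  ∀ i t : Fin k, (t < i → (eqv k).symm (j i.succ) t = false) ∧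
    (i < t → (eqv k).symm (j i.succ) t = (eqv k).symm (j 0) t)

noncomputable def sgn (k : ℕ) (j : Fin (k + 1) → Fin (2 ^ k)) : ℝ :=
  ∏ i : Fin k, (if (eqv k).symm (j 0) i && (eqv k).symm (j i.succ) i then (-1 : ℝ) else 1)

open Classical in
noncomputable def cstar (k : ℕ) (j : Fin (k + 1) → Fin (2 ^ k)) : ℝ :=
  if condP k j then sgn k j else 0

lemma Phi_zero (k : ℕ) (q : (Fin k → Bool) × (Fin k → Bool)) : Phi k q 0 = eqv k q.1 := rfl

lemma Phi_succ (k : ℕ) (q : (Fin k → Bool) × (Fin k → Bool)) (i : Fin k) :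
    Phi k q i.succ = eqv k (idxf k i q.1 (q.2 i)) := by
  simp [Phi]

lemma idxf_self (k : ℕ) (i : Fin k) (b : Fin k → Bool) (β : Bool) : idxf k i b β i = β := by
  simp [idxf]

lemma condP_Phi (k : ℕ) (q : (Fin k → Bool) × (Fin k → Bool)) : condP k (Phi k q) := by
  intro i t
  rw [Phi_succ, Phi_zero, Equiv.symm_apply_apply, Equiv.symm_apply_apply]
  constructor
  · intro ht; simp [idxf, ht]
  · intro ht; simp [idxf, not_lt_of_gt ht, (ne_of_gt ht)]

lemma sgn_Phi (k : ℕ) (q : (Fin k → Bool) × (Fin k → Bool)) :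
    sgn k (Phi k q) = ∏ i : Fin k, (if q.1 i && q.2 i then (-1 : ℝ) else 1) := by
  unfold sgn
  refine Finset.prod_congr rfl fun i _ => ?_
  rw [Phi_succ, Phi_zero, Equiv.symm_apply_apply, Equiv.symm_apply_apply, idxf_self]

lemma abs_sgn (k : ℕ) (j : Fin (k + 1) → Fin (2 ^ k)) : |sgn k j| = 1 := by
  unfold sgn
  rw [Finset.abs_prod]
  refine Finset.prod_eq_one fun i _ => ?_
  split <;> simp

lemma cstar_Phi (k : ℕ) (q : (Fin k → Bool) × (Fin k → Bool)) :
    cstar k (Phi k q) = ∏ i : Fin k, (if q.1 i && q.2 i then (-1 : ℝ) else 1) := by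
  rw [cstar, if_pos (condP_Phi k q), sgn_Phi]

lemma cstar_abs_of_ne (k : ℕ) (j : Fin (k + 1) → Fin (2 ^ k)) (h : cstar k j ≠ 0) :
    |cstar k j| = 1 := by
  rw [cstar] at *
  split at h
  case isTrue hc => rw [if_pos hc, abs_sgn]
  case isFalse => exact absurd rfl h

lemma Phi_inj (k : ℕ) : Function.Injective (Phi k) := by
  intro q q' h
  have h1 : q.1 = q'.1 := by
    have := congrFun h 0
    rw [Phi_zero, Phi_zero] at this
    exact (eqv k).injective this
  have h2 : q.2 = q'.2 := by
    funext i
    have := congrFun h i.succ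
    rw [Phi_succ, Phi_succ] at this
    have h3 := (eqv k).injective this
    have := congrFun h3 i
    rwa [idxf_self, idxf_self] at this
  exact Prod.ext h1 h2

lemma exists_Phi_of_ne (k : ℕ) (j : Fin (k + 1) → Fin (2 ^ k)) (h : cstar k j ≠ 0) :
    ∃ q, Phi k q = j := by
  have hc : condP k j := by
    by_contra hc
    rw [cstar, if_neg hc] at h
    exact h rfl
  refine ⟨((eqv k).symm (j 0), fun i => (eqv k).symm (j i.succ) i), ?_⟩
  funext s
  refine Fin.cases ?_ (fun i => ?_) s
  · rw [Phi_zero]; exact (eqv k).apply_symm_apply _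
  · rw [Phi_succ]
    have : idxf k i ((eqv k).symm (j 0)) ((eqv k).symm (j i.succ) i) = (eqv k).symm (j i.succ) := by
      funext t
      rcases lt_trichotomy t i with ht | rfl | ht
      · rw [((hc i t).1 ht)]; simp [idxf, ht]
      · simp [idxf]
      · rw [((hc i t).2 ht)]; simp [idxf, not_lt_of_gt ht, (ne_of_gt ht)]
    rw [this]
    exact (eqv k).apply_symm_apply _

lemma supp_eq (k : ℕ) :
    Finset.univ.filter (fun j : Fin (k + 1) → Fin (2 ^ k) => cstar k j ≠ 0)
      = Finset.image (Phi k) Finset.univ := by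
  ext j
  simp only [Finset.mem_filter, Finset.mem_univ, true_and, Finset.mem_image]
  constructor
  · intro h
    obtain ⟨q, hq⟩ := exists_Phi_of_ne k j h
    exact ⟨q, hq⟩
  · rintro ⟨q, _, rfl⟩
    rw [cstar_Phi]
    have : |∏ i : Fin k, (if q.1 i && q.2 i then (-1 : ℝ) else 1)| = 1 := by
      rw [Finset.abs_prod]
      refine Finset.prod_eq_one fun i _ => ?_
      split <;> simp
    intro h0
    rw [h0] at this
    simp at this

lemma card_supp (k : ℕ) :
    (Finset.univ.filter (fun j : Fin (k + 1) → Fin (2 ^ k) => cstar k j ≠ 0)).card = 4 ^ k := by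
  rw [supp_eq, Finset.card_image_of_injective _ (Phi_inj k), Finset.card_univ]
  rw [Fintype.card_prod, Fintype.card_fun, Fintype.card_bool, Fintype.card_fin,
    ← pow_add, ← two_mul, pow_mul]
  norm_num

lemma TT_cstar_apply (k : ℕ) (x : Fin (k + 1) → PiLp ⊤ fun _ : Fin (2 ^ k) => ℝ) :
    TT (k + 1) (2 ^ k) (cstar k) x
      = ∑ b : Fin k → Bool, (x 0) (eqv k b) *
          ∏ i : Fin k, ((x i.succ) (eqv k (idxf k i b false)) +
            (if b i then (-1 : ℝ) else 1) * (x i.succ) (eqv k (idxf k i b true))) := by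
  rw [TT_apply]
  rw [← Finset.sum_subset (Finset.subset_univ
      (Finset.univ.filter (fun j : Fin (k + 1) → Fin (2 ^ k) => cstar k j ≠ 0)))
    (fun j _ hj => by
      have : cstar k j = 0 := by simpa using hj
      rw [this, zero_mul])]
  rw [supp_eq, Finset.sum_image (fun q _ q' _ h => Phi_inj k h), Fintype.sum_prod_type]
  refine Finset.sum_congr rfl fun b _ => ?_
  have hsplit : ∀ i : Fin k,
      (x i.succ) (eqv k (idxf k i b false)) +
          (if b i then (-1 : ℝ) else 1) * (x i.succ) (eqv k (idxf k i b true))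
        = ∑ β : Bool, (if b i && β then (-1 : ℝ) else 1) * (x i.succ) (eqv k (idxf k i b β)) := by
    intro i
    rw [Fintype.sum_bool]
    cases hb : b i <;> simp [add_comm]
  calc ∑ b' : Fin k → Bool, cstar k (Phi k (b, b')) * ∏ s, x s (Phi k (b, b') s)
      = ∑ b' : Fin k → Bool, (x 0) (eqv k b) *
          ∏ i : Fin k, ((if b i && b' i then (-1 : ℝ) else 1) *
            (x i.succ) (eqv k (idxf k i b (b' i)))) := by
        refine Finset.sum_congr rfl fun b' _ => ?_
        rw [cstar_Phi, Fin.prod_univ_succ, Phi_zero, Finset.prod_mul_distrib]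
        have hP : (∏ i : Fin k, x i.succ (Phi k (b, b') i.succ))
            = ∏ i : Fin k, x i.succ ((eqv k) (idxf k i b (b' i))) :=
          Finset.prod_congr rfl fun i _ => congrArg (x i.succ) (Phi_succ k (b, b') i)
        rw [hP]
        ring
    _ = (x 0) (eqv k b) * ∑ b' : Fin k → Bool,
          ∏ i : Fin k, ((if b i && b' i then (-1 : ℝ) else 1) *
            (x i.succ) (eqv k (idxf k i b (b' i)))) := by
        rw [Finset.mul_sum]
    _ = (x 0) (eqv k b) *
          ∏ i : Fin k, ((x i.succ) (eqv k (idxf k i b false)) +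
            (if b i then (-1 : ℝ) else 1) * (x i.succ) (eqv k (idxf k i b true))) := by
        congr 1
        rw [← Fintype.prod_sum
          (f := fun (i : Fin k) (β : Bool) =>
            (if b i && β then (-1 : ℝ) else 1) * (x i.succ) (eqv k (idxf k i b β)))]
        exact (Finset.prod_congr rfl fun i _ => hsplit i).symm

lemma idxf_dep (k : ℕ) (i : Fin k) (b b' : Fin k → Bool)
    (h : ∀ t : Fin k, i ≤ t → b t = b' t) (β : Bool) : idxf k i b β = idxf k i b' β := by
  funext t
  unfold idxf
  rcases lt_trichotomy t i with ht | rfl | ht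
  · simp [ht]
  · simp
  · simp only [not_lt_of_gt ht, if_false, ne_of_gt ht, ite_false]
    exact h t (le_of_lt ht)

lemma TT_cstar_bound (k : ℕ) (x : Fin (k + 1) → PiLp ⊤ fun _ : Fin (2 ^ k) => ℝ) :
    |TT (k + 1) (2 ^ k) (cstar k) x| ≤ 2 ^ k * ∏ s, ‖x s‖ := by
  rw [TT_cstar_apply]
  set G : Fin k → (Fin k → Bool) → ℝ := fun i b =>
    |(x i.succ) (eqv k (idxf k i b false)) +
      (if b i then (-1 : ℝ) else 1) * (x i.succ) (eqv k (idxf k i b true))| with hG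
  have hGdep : ∀ (i : Fin k) (b b' : Fin k → Bool),
      (∀ t : Fin k, i ≤ t → b t = b' t) → G i b = G i b' := by
    intro i b b' h
    have e1 : ∀ β, (x i.succ) ((eqv k) (idxf k i b β)) = (x i.succ) ((eqv k) (idxf k i b' β)) :=
      fun β => congrArg _ (congrArg _ (idxf_dep k i b b' h β))
    show |(x i.succ) ((eqv k) (idxf k i b false)) +
        (if b i then (-1 : ℝ) else 1) * (x i.succ) ((eqv k) (idxf k i b true))|
      = |(x i.succ) ((eqv k) (idxf k i b' false)) +
        (if b' i then (-1 : ℝ) else 1) * (x i.succ) ((eqv k) (idxf k i b' true))|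
    rw [e1 false, e1 true, h i (le_refl i)]
  have hGsum : ∀ (i : Fin k) (b : Fin k → Bool),
      G i (Function.update b i false) + G i (Function.update b i true) ≤ 2 * ‖x i.succ‖ := by
    intro i b
    have hupd : ∀ (v β : Bool), idxf k i (Function.update b i v) β = idxf k i b β := by
      intro v β
      funext t
      unfold idxf
      rcases lt_trichotomy t i with ht | rfl | ht
      · simp [ht]
      · simp
      · simp only [not_lt_of_gt ht, if_false, ne_of_gt ht, ite_false]
        exact Function.update_of_ne (ne_of_gt ht) v b
    have e : ∀ v β, (x i.succ) ((eqv k) (idxf k i (Function.update b i v) β))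
        = (x i.succ) ((eqv k) (idxf k i b β)) :=
      fun v β => congrArg _ (congrArg _ (hupd v β))
    have hA := coord_abs_le (2 ^ k) (x i.succ) (eqv k (idxf k i b false))
    have hB := coord_abs_le (2 ^ k) (x i.succ) (eqv k (idxf k i b true))
    have hmain := habs ((x i.succ) (eqv k (idxf k i b false)))
      ((x i.succ) (eqv k (idxf k i b true))) (‖x i.succ‖) hA hB
    show |(x i.succ) ((eqv k) (idxf k i (Function.update b i false) false)) +
        (if Function.update b i false i then (-1 : ℝ) else 1) *
          (x i.succ) ((eqv k) (idxf k i (Function.update b i false) true))|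
      + |(x i.succ) ((eqv k) (idxf k i (Function.update b i true) false)) +
        (if Function.update b i true i then (-1 : ℝ) else 1) *
          (x i.succ) ((eqv k) (idxf k i (Function.update b i true) true))|
      ≤ 2 * ‖x i.succ‖
    rw [e false false, e false true, e true false, e true true,
      Function.update_self, Function.update_self]
    simp only [Bool.false_eq_true, if_false, if_true, one_mul, neg_one_mul,
      ← sub_eq_add_neg]
    exact hmain
  calc |∑ b : Fin k → Bool, (x 0) (eqv k b) *
        ∏ i : Fin k, ((x i.succ) (eqv k (idxf k i b false)) +
          (if b i then (-1 : ℝ) else 1) * (x i.succ) (eqv k (idxf k i b true)))|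
      ≤ ∑ b : Fin k → Bool, |(x 0) (eqv k b)| * ∏ i : Fin k, G i b := by
        refine le_trans (Finset.abs_sum_le_sum_abs _ _) (le_of_eq ?_)
        refine Finset.sum_congr rfl fun b _ => ?_
        rw [abs_mul, Finset.abs_prod]
    _ ≤ ∑ b : Fin k → Bool, ‖x 0‖ * ∏ i : Fin k, G i b := by
        refine Finset.sum_le_sum fun b _ => ?_
        exact mul_le_mul_of_nonneg_right (coord_abs_le _ _ _)
          (Finset.prod_nonneg fun i _ => abs_nonneg _)
    _ = ‖x 0‖ * ∑ b : Fin k → Bool, ∏ i : Fin k, G i b := (Finset.mul_sum _ _ _).symm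
    _ ≤ ‖x 0‖ * (2 ^ k * ∏ i : Fin k, ‖x i.succ‖) := by
        refine mul_le_mul_of_nonneg_left ?_ (norm_nonneg _)
        exact descent k G (fun i => ‖x i.succ‖) (fun i b => abs_nonneg _)
          (fun i => norm_nonneg _) hGdep hGsum
    _ = 2 ^ k * ∏ s : Fin (k + 1), ‖x s‖ := by
        rw [Fin.prod_univ_succ]
        ring

lemma sum_sq_cstar (k : ℕ) :
    ∑ j : Fin (k + 1) → Fin (2 ^ k), (cstar k j) ^ 2 = 4 ^ k := by
  rw [← Finset.sum_subset (Finset.subset_univ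
      (Finset.univ.filter (fun j : Fin (k + 1) → Fin (2 ^ k) => cstar k j ≠ 0)))
    (fun j _ hj => by
      have h0 : cstar k j = 0 := by simpa using hj
      rw [h0]; ring)]
  rw [Finset.sum_congr rfl (fun j hj => by
    have h1 : |cstar k j| = 1 := cstar_abs_of_ne k j (Finset.mem_filter.mp hj).2
    rw [← sq_abs, h1, one_pow])]
  rw [Finset.sum_const, card_supp]
  simp

lemma bh_sum_cstar (k : ℕ) (p : ℝ) (hp : p ≠ 0) :
    ∑ j : Fin (k + 1) → Fin (2 ^ k), |cstar k j| ^ p = 4 ^ k := by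
  rw [← Finset.sum_subset (Finset.subset_univ
      (Finset.univ.filter (fun j : Fin (k + 1) → Fin (2 ^ k) => cstar k j ≠ 0)))
    (fun j _ hj => by
      have h0 : cstar k j = 0 := by simpa using hj
      rw [h0, abs_zero, Real.zero_rpow hp])]
  rw [Finset.sum_congr rfl (fun j hj => by
    rw [cstar_abs_of_ne k j (Finset.mem_filter.mp hj).2, Real.one_rpow])]
  rw [Finset.sum_const, card_supp]
  simp

lemma norm_TT_cstar (k : ℕ) : ‖TT (k + 1) (2 ^ k) (cstar k)‖ = (2 : ℝ) ^ k := by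
  have hle : ‖TT (k + 1) (2 ^ k) (cstar k)‖ ≤ 2 ^ k := by
    refine ContinuousMultilinearMap.opNorm_le_bound (by positivity) fun x => ?_
    rw [Real.norm_eq_abs]
    exact TT_cstar_bound k x
  have hsq := sum_sq_le (k + 1) (2 ^ k) (TT (k + 1) (2 ^ k) (cstar k))
  have h1 : ∑ j : Fin (k + 1) → Fin (2 ^ k),
      (TT (k + 1) (2 ^ k) (cstar k) fun s => stdBasis (2 ^ k) (j s)) ^ 2 = 4 ^ k := by
    rw [Finset.sum_congr rfl (fun j _ => by rw [TT_basis]), sum_sq_cstar]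
  rw [h1] at hsq
  have h4 : (4 : ℝ) ^ k = ((2 : ℝ) ^ k) ^ 2 := by
    rw [← pow_mul, mul_comm, pow_mul]
    norm_num
  rw [h4] at hsq
  have hge : (2 : ℝ) ^ k ≤ ‖TT (k + 1) (2 ^ k) (cstar k)‖ := by
    nlinarith [ContinuousMultilinearMap.opNorm_nonneg (TT (k + 1) (2 ^ k) (cstar k)),
      pow_pos (show (0:ℝ) < 2 by norm_num) k]
  linarith

/-- If an `m`-linear form `U` on `(ℝⁿ)^m` (sup norms) has at most `4^{m−1}` nonzero
monomial coefficients, then the Bohnenblust–Hille sum satisfies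
`(∑|U|^{2m/(m+1)})^{(m+1)/(2m)} ≤ 2^{1−1/m} ‖U‖`; moreover the constant
`2^{1−1/m}` is attained by a nonzero form with exactly `4^{m−1}` monomials. -/
theorem stmt17 (m : ℕ) (hm : 1 ≤ m) :
    (∀ (n : ℕ)
      (U : ContinuousMultilinearMap ℝ (fun _ : Fin m => PiLp ⊤ fun _ : Fin n => ℝ) ℝ),
      (Finset.univ.filter
          (fun j : Fin m → Fin n => U (fun s => stdBasis n (j s)) ≠ 0)).card ≤ 4 ^ (m - 1) →
      (∑ j : Fin m → Fin n,
          |U (fun s => stdBasis n (j s))| ^ ((2 * m : ℝ) / (m + 1))) ^ ((m + 1 : ℝ) / (2 * m))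
        ≤ (2 : ℝ) ^ ((1 : ℝ) - 1 / m) * ‖U‖)
    ∧ (∃ (n : ℕ)
        (U : ContinuousMultilinearMap ℝ (fun _ : Fin m => PiLp ⊤ fun _ : Fin n => ℝ) ℝ),
        U ≠ 0 ∧
        (Finset.univ.filter
            (fun j : Fin m → Fin n => U (fun s => stdBasis n (j s)) ≠ 0)).card = 4 ^ (m - 1) ∧
        (∑ j : Fin m → Fin n,
            |U (fun s => stdBasis n (j s))| ^ ((2 * m : ℝ) / (m + 1))) ^ ((m + 1 : ℝ) / (2 * m))
          = (2 : ℝ) ^ ((1 : ℝ) - 1 / m) * ‖U‖) := by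
  constructor
  · intro n U hcard
    exact part1 m hm n U hcard
  · obtain ⟨k, rfl⟩ : ∃ k, m = k + 1 := ⟨m - 1, (Nat.succ_pred_eq_of_pos hm).symm⟩
    refine ⟨2 ^ k, TT (k + 1) (2 ^ k) (cstar k), ?_, ?_, ?_⟩
    · intro h0
      have hn := norm_TT_cstar k
      rw [h0, norm_zero] at hn
      have hpos : (0 : ℝ) < 2 ^ k := by positivity
      linarith
    · have hfil : Finset.univ.filter (fun j : Fin (k + 1) → Fin (2 ^ k) =>
          (TT (k + 1) (2 ^ k) (cstar k)) (fun s => stdBasis (2 ^ k) (j s)) ≠ 0)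
          = Finset.univ.filter (fun j => cstar k j ≠ 0) :=
        Finset.filter_congr (fun j _ => by rw [TT_basis])
      rw [hfil, card_supp]
      simp
    · have hp : ((2 * ((k + 1 : ℕ) : ℝ)) / (((k + 1 : ℕ) : ℝ) + 1)) ≠ 0 := by positivity
      have h1 : (∑ j : Fin (k + 1) → Fin (2 ^ k),
          |TT (k + 1) (2 ^ k) (cstar k) (fun s => stdBasis (2 ^ k) (j s))|
            ^ ((2 * ((k + 1 : ℕ) : ℝ)) / (((k + 1 : ℕ) : ℝ) + 1)))
          = (4 : ℝ) ^ k := by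
        rw [Finset.sum_congr rfl (fun j _ => by rw [TT_basis]), bh_sum_cstar k _ hp]
      rw [h1, norm_TT_cstar]
      have h4 : (4 : ℝ) ^ k = (2 : ℝ) ^ (((2 * k : ℕ) : ℝ)) := by
        rw [Real.rpow_natCast, pow_mul]
        norm_num
      rw [h4, ← Real.rpow_mul (by norm_num : (0:ℝ) ≤ 2), ← Real.rpow_natCast 2 k,
        ← Real.rpow_add (by norm_num : (0:ℝ) < 2)]
      congr 1
      have hk1 : ((k : ℝ) + 1) ≠ 0 := by positivity
      push_cast
      field_simp
      ring
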